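/- Let f : U → V be a map in the set-up such that each connected component of V contains at most one critical point of f, and assume (∗∗). Let [c1] and [c2] be two distinct equivalence classes, and for i = 1, 2 let W_i be a nice set consisting of finitely many puzzle pieces such that each piece of W_i contains a point of [c_i]. Suppose [c2] does not accumulate to [c1], and the minimal depth of the components of W_2 is greater than or equal to the maximal depth of the components of W_1. Then W_1 ∪ W_2 is nice. -/

import Mathlib

set_option maxHeartbeats 1000000


open Set Function Topology

noncomputable section

/-- A (bounded) Jordan domain in the plane: a bounded connected open set whose
frontier is a Jordan curve, i.e. an injective continuous image of the circle. -/
def IsJordanDomain (Ω : Set ℂ) : Prop :=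
  IsOpen Ω ∧ IsConnected Ω ∧ Bornology.IsBounded Ω ∧
  ∃ g : Metric.sphere (0:ℂ) 1 → ℂ, Continuous g ∧ Function.Injective g ∧
    Set.range g = frontier Ω

/-- `A` is strictly contained in `X`: it is a proper subset of some connected
component of `X`. -/
def StrictlyContainedIn (A X : Set ℂ) : Prop :=
  ∃ x ∈ X, A ⊂ connectedComponentIn X x

/-- The set-up: `V ⊆ ℂ` is open with finitely many components, each a bounded Jordan
domain, with pairwise disjoint closures; `U` is open with closure contained in `V`,
with finitely many components with pairwise disjoint closures; `f : U → V` is proper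
holomorphic; every critical point of `f` lies in `K_f`. -/
structure Setup where
  U : Set ℂ
  V : Set ℂ
  f : ℂ → ℂ
  hV_open : IsOpen V
  hV_comp_finite : {C : Set ℂ | ∃ x ∈ V, C = connectedComponentIn V x}.Finite
  hV_jordan : ∀ x ∈ V, IsJordanDomain (connectedComponentIn V x)
  hV_disj : ∀ x ∈ V, ∀ y ∈ V, connectedComponentIn V x ≠ connectedComponentIn V y →
    closure (connectedComponentIn V x) ∩ closure (connectedComponentIn V y) = ∅
  hU_open : IsOpen U
  hUV : closure U ⊆ V
  hU_comp_finite : {C : Set ℂ | ∃ x ∈ U, C = connectedComponentIn U x}.Finite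
  hU_disj : ∀ x ∈ U, ∀ y ∈ U, connectedComponentIn U x ≠ connectedComponentIn U y →
    closure (connectedComponentIn U x) ∩ closure (connectedComponentIn U y) = ∅
  hf_maps : Set.MapsTo f U V
  hf_holo : DifferentiableOn ℂ f U
  hf_proper : ∀ K ⊆ V, IsCompact K → IsCompact (U ∩ f ⁻¹' K)
  hf_crit : ∀ z ∈ U, deriv f z = 0 → ∀ n : ℕ, f^[n] z ∈ U

namespace Setup

variable (S : Setup)

/-- `K_f = {z ∈ U : f^n(z) ∈ U for all n}`. -/
def K : Set ℂ := {z | z ∈ S.U ∧ ∀ n : ℕ, S.f^[n] z ∈ S.U}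

/-- The set of critical points of `f`. -/
def Crit : Set ℂ := {z | z ∈ S.U ∧ deriv S.f z = 0}

/-- `preV n = f^{-n}(V)`, preimages being taken for the partial map `f : U → V`. -/
def preV : ℕ → Set ℂ
  | 0 => S.V
  | n+1 => S.U ∩ S.f ⁻¹' (preV n)

/-- `P` is a puzzle piece of depth `n`: a connected component of `f^{-n}(V)`. -/
def IsPieceOfDepth (n : ℕ) (P : Set ℂ) : Prop :=
  ∃ x ∈ S.preV n, P = connectedComponentIn (S.preV n) x

/-- `P` is a puzzle piece. -/
def IsPiece (P : Set ℂ) : Prop := ∃ n, S.IsPieceOfDepth n P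

/-- `piece n x = P_n(x)`, the puzzle piece of depth `n` containing `x`. -/
def piece (n : ℕ) (x : ℂ) : Set ℂ := connectedComponentIn (S.preV n) x

/-- `X` is a finite union of puzzle pieces. -/
def IsPieceUnion (X : Set ℂ) : Prop :=
  ∃ P : Set (Set ℂ), P.Finite ∧ (∀ Q ∈ P, S.IsPiece Q) ∧ X = ⋃₀ P

/-- `X` is nice: for every connected component `P` of `X` and every `n ≥ 1`,
`f^n(P)` is not strictly contained in `X`. -/
def Nice (X : Set ℂ) : Prop :=
  ∀ x ∈ X, ∀ n : ℕ, 1 ≤ n →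
    ¬ StrictlyContainedIn (S.f^[n] '' connectedComponentIn X x) X

/-- `preIm X n = f^{-n}(X)`, preimages being taken for the partial map `f : U → V`. -/
def preIm (X : Set ℂ) : ℕ → Set ℂ
  | 0 => X
  | n+1 => S.U ∩ S.f ⁻¹' (preIm X n)

/-- `D(X) = ⋃_{k ≥ 0} f^{-k}(X)`. -/
def D (X : Set ℂ) : Set ℂ := ⋃ k, S.preIm X k

/-- For `z ∈ D(X) ∖ X`, `k` is the landing time `k(z)`: the minimal positive
integer with `f^k(z) ∈ X`. -/
def IsLandingTime (X : Set ℂ) (z : ℂ) (k : ℕ) : Prop :=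
  1 ≤ k ∧ S.f^[k] z ∈ X ∧ ∀ j, 1 ≤ j → j < k → S.f^[j] z ∉ X

/-- `landComp X z k = Comp_z(f^{-k}(Comp_{f^k(z)}(X)))`; for `k = k(z)` this is
`L_z(X)`. -/
def landComp (X : Set ℂ) (z : ℂ) (k : ℕ) : Set ℂ :=
  connectedComponentIn (S.preIm (connectedComponentIn X (S.f^[k] z)) k) z

/-- `x` combinatorially accumulates to `y`: for every `n ≥ 0` there is `j ≥ 1`
with `f^j(x) ∈ P_n(y)`. -/
def Acc (x y : ℂ) : Prop := ∀ n : ℕ, ∃ j : ℕ, 1 ≤ j ∧ S.f^[j] x ∈ S.piece n y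

/-- `Forw(x) = {y ∈ K_f : x → y}`. -/
def Forw (x : ℂ) : Set ℂ := {y | y ∈ S.K ∧ S.Acc x y}

/-- The equivalence `c1 ∼ c2` on critical points. -/
def Equiv (c1 c2 : ℂ) : Prop := c1 = c2 ∨ (S.Acc c1 c2 ∧ S.Acc c2 c1)

/-- The class `[c]` of a critical point `c`. -/
def cls (c : ℂ) : Set ℂ := {c' | c' ∈ S.Crit ∧ S.Equiv c c'}

/-- `D(f) = Crit(f)/∼`, the set of equivalence classes. -/
def classes : Set (Set ℂ) := {A | ∃ c ∈ S.Crit, A = S.cls c}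

/-- `[c1] → [c2]`. -/
def ClassAcc (A B : Set ℂ) : Prop := ∃ c1 ∈ A, ∃ c2 ∈ B, S.Acc c1 c2

/-- The partial order on classes: `A ≤ B` iff `A = B` or `B → A`. -/
def ClassLe (A B : Set ℂ) : Prop := A = B ∨ S.ClassAcc B A

/-- The minimal elements of a family of classes w.r.t. `ClassLe`. -/
def minimalsIn (T : Set (Set ℂ)) : Set (Set ℂ) :=
  {A | A ∈ T ∧ ∀ B ∈ T, S.ClassLe B A → B = A}

/-- Auxiliary: `(D_k(f), D_0(f) ∪ ⋯ ∪ D_k(f))`. -/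
def DlevelAux : ℕ → Set (Set ℂ) × Set (Set ℂ)
  | 0 => (S.minimalsIn S.classes, S.minimalsIn S.classes)
  | k+1 =>
      (S.minimalsIn (S.classes \ (DlevelAux k).2),
        (DlevelAux k).2 ∪ S.minimalsIn (S.classes \ (DlevelAux k).2))

/-- `Dlevel k = D_k(f)`. -/
def Dlevel (k : ℕ) : Set (Set ℂ) := (S.DlevelAux k).1

/-- Each connected component of `V` contains at most one critical point. -/
def OneCritPerComp : Prop :=
  ∀ c ∈ S.Crit, ∀ c' ∈ S.Crit,
    connectedComponentIn S.V c = connectedComponentIn S.V c' → c = c'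

/-- Assumption (∗∗): if `c` does not combinatorially accumulate to `c'`, then
`f^j(c) ∉ P_0(c')` for all `j ≥ 1`. -/
def StarStar : Prop :=
  ∀ c ∈ S.Crit, ∀ c' ∈ S.Crit, ¬ S.Acc c c' →
    ∀ j : ℕ, 1 ≤ j → S.f^[j] c ∉ S.piece 0 c'

/-- `K_f(x)`, the connected component of `K_f` containing `x`. -/
def Kcomp (x : ℂ) : Set ℂ := connectedComponentIn S.K x

/-- `P_{n+k}(c1)` is a child of `P_n(c2)`: `f^k(P_{n+k}(c1)) = P_n(c2)` and
`f^{k-1}` maps `P_{n+k-1}(f(c1))` conformally onto `P_n(c2)`. -/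
def IsChild (c1 : ℂ) (k : ℕ) (n : ℕ) (c2 : ℂ) : Prop :=
  1 ≤ k ∧ S.f^[k] '' S.piece (n+k) c1 = S.piece n c2 ∧
  Set.InjOn (S.f^[k-1]) (S.piece (n+k-1) (S.f c1)) ∧
  S.f^[k-1] '' S.piece (n+k-1) (S.f c1) = S.piece n c2

/-- `c` is persistently recurrent: for every `n ≥ 0` and every `c' ∈ [c]`,
`P_n(c')` has only finitely many children. -/
def PersistentlyRecurrent (c : ℂ) : Prop :=
  ∀ n : ℕ, ∀ c' ∈ S.cls c,
    {Q : Set ℂ | ∃ c1 ∈ S.cls c, ∃ k : ℕ, S.IsChild c1 k n c' ∧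
      Q = S.piece (n+k) c1}.Finite

/-- `Crit_n(f)`. -/
def CritN : Set ℂ := {c | c ∈ S.Crit ∧ ∀ c' ∈ S.Crit, ¬ S.Acc c c'}

/-- `Crit_e(f)`. -/
def CritE : Set ℂ := {c | c ∈ S.Crit ∧ ¬ S.Acc c c ∧ ∃ c' ∈ S.Crit, S.Acc c c'}

/-- `Crit_r(f)`. -/
def CritR : Set ℂ := {c | c ∈ S.Crit ∧ S.Acc c c ∧ ¬ S.PersistentlyRecurrent c}

/-- `Crit_p(f)`. -/
def CritP : Set ℂ := {c | c ∈ S.Crit ∧ S.Acc c c ∧ S.PersistentlyRecurrent c}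

end Setup


namespace Setup
variable (S : Setup)

lemma hU_sub_V : S.U ⊆ S.V := fun _ hx => S.hUV (subset_closure hx)

lemma f_contOn : ContinuousOn S.f S.U := S.hf_holo.continuousOn

lemma preV_open : ∀ n, IsOpen (S.preV n)
  | 0 => S.hV_open
  | n+1 => S.f_contOn.isOpen_inter_preimage S.hU_open (preV_open n)

lemma preV_succ_sub : ∀ n, S.preV (n+1) ⊆ S.preV n
  | 0 => fun x hx => S.hU_sub_V hx.1
  | n+1 => fun x hx => ⟨hx.1, preV_succ_sub n hx.2⟩

lemma preV_mono : ∀ {m n : ℕ}, m ≤ n → S.preV n ⊆ S.preV m := by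
  intro m n h
  induction n with
  | zero => rw [Nat.le_zero.mp h]
  | succ n ih =>
    rcases Nat.lt_or_ge m (n+1) with h' | h'
    · exact (S.preV_succ_sub n).trans (ih (Nat.lt_succ_iff.mp h'))
    · rw [le_antisymm h h']

lemma piece_open (n : ℕ) (x : ℂ) : IsOpen (S.piece n x) :=
  (S.preV_open n).connectedComponentIn

lemma pieceOfDepth_open {n : ℕ} {P : Set ℂ} (h : S.IsPieceOfDepth n P) : IsOpen P := by
  obtain ⟨y, _, rfl⟩ := h; exact (S.preV_open n).connectedComponentIn

lemma pieceOfDepth_preconn {n : ℕ} {P : Set ℂ} (h : S.IsPieceOfDepth n P) :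
    IsPreconnected P := by
  obtain ⟨y, _, rfl⟩ := h; exact isPreconnected_connectedComponentIn

lemma pieceOfDepth_sub {n : ℕ} {P : Set ℂ} (h : S.IsPieceOfDepth n P) : P ⊆ S.preV n := by
  obtain ⟨y, _, rfl⟩ := h; exact connectedComponentIn_subset _ _

lemma pieceOfDepth_eq {n : ℕ} {P : Set ℂ} {x : ℂ} (h : S.IsPieceOfDepth n P) (hx : x ∈ P) :
    P = connectedComponentIn (S.preV n) x := by
  obtain ⟨y, _, rfl⟩ := h; exact connectedComponentIn_eq hx

lemma nested {m n : ℕ} (hmn : m ≤ n) {P Q : Set ℂ} (hP : S.IsPieceOfDepth n P)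
    (hQ : S.IsPieceOfDepth m Q) (hPQ : (P ∩ Q).Nonempty) : P ⊆ Q := by
  obtain ⟨z, hzP, hzQ⟩ := hPQ
  have h1 : P ⊆ S.preV m := (S.pieceOfDepth_sub hP).trans (S.preV_mono hmn)
  have h2 : P ⊆ connectedComponentIn (S.preV m) z :=
    (S.pieceOfDepth_preconn hP).subset_connectedComponentIn hzP h1
  rwa [← S.pieceOfDepth_eq hQ hzQ] at h2

lemma orbit_mem_preV : ∀ (n : ℕ) {z : ℂ}, (∀ j, S.f^[j] z ∈ S.U) →
    ∀ {d : ℕ}, S.f^[n] z ∈ S.preV d → z ∈ S.preV (n + d) := by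
  intro n
  induction n with
  | zero => intro z _ d h; simpa using h
  | succ n ih =>
    intro z hz d h
    have h1 : S.f^[n] (S.f z) ∈ S.preV d := by
      rwa [← Function.iterate_succ_apply]
    have h2 : ∀ j, S.f^[j] (S.f z) ∈ S.U := fun j => by
      rw [← Function.iterate_succ_apply]; exact hz (j+1)
    have h3 : S.f z ∈ S.preV (n + d) := ih h2 h1
    have : z ∈ S.preV ((n + d) + 1) := ⟨by simpa using hz 0, h3⟩
    rwa [show n + 1 + d = (n + d) + 1 by omega]


lemma image_component {A : Set ℂ} (hA : IsOpen A) (hAV : A ⊆ S.V) {x : ℂ}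
    (hx : x ∈ S.U ∩ S.f ⁻¹' A) :
    S.f '' connectedComponentIn (S.U ∩ S.f ⁻¹' A) x = connectedComponentIn A (S.f x) := by
  set B := S.U ∩ S.f ⁻¹' A with hBdef
  have hBopen : IsOpen B := S.f_contOn.isOpen_inter_preimage S.hU_open hA
  set P := connectedComponentIn B x with hPdef
  have hPopen : IsOpen P := hBopen.connectedComponentIn
  have hPB : P ⊆ B := connectedComponentIn_subset _ _
  have hPU : P ⊆ S.U := fun z hz => (hPB hz).1
  have hxP : x ∈ P := mem_connectedComponentIn hx
  have hPconn : IsConnected P := ⟨⟨x, hxP⟩, isPreconnected_connectedComponentIn⟩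
  set C := connectedComponentIn A (S.f x) with hCdef
  have hCopen : IsOpen C := hA.connectedComponentIn
  have hCA : C ⊆ A := connectedComponentIn_subset _ _
  have hfPA : S.f '' P ⊆ A := by rintro _ ⟨z, hz, rfl⟩; exact (hPB hz).2
  have hfPC : S.f '' P ⊆ C :=
    (hPconn.image _ (S.f_contOn.mono hPU)).isPreconnected.subset_connectedComponentIn
      ⟨x, hxP, rfl⟩ hfPA
  -- f is not constant on P
  have hnotconst : ¬ ∃ w, ∀ z ∈ P, S.f z = w := by
    rintro ⟨w, hw⟩
    have hwA : w ∈ A := hw x hxP ▸ hx.2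
    have hM : IsCompact (S.U ∩ S.f ⁻¹' {w}) :=
      S.hf_proper _ (by simpa using hAV hwA) isCompact_singleton
    have hPM : P ⊆ S.U ∩ S.f ⁻¹' {w} := fun z hz => ⟨hPU hz, hw z hz⟩
    have hclP : closure P ⊆ S.U ∩ S.f ⁻¹' {w} := hM.isClosed.closure_subset_iff.mpr hPM
    have hclB : closure P ⊆ B := fun z hz =>
      ⟨(hclP hz).1, by
        have hz2 : S.f z = w := (hclP hz).2
        simp only [mem_preimage, hz2]; exact hwA⟩
    have hclPP : closure P ⊆ P :=
      isPreconnected_connectedComponentIn.closure.subset_connectedComponentIn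
        (subset_closure hxP) hclB
    have hPuniv : P = univ :=
      IsClopen.eq_univ ⟨isClosed_of_closure_subset hclPP, hPopen⟩ ⟨x, hxP⟩
    have : IsCompact (univ : Set ℂ) :=
      hM.of_isClosed_subset isClosed_univ (by rw [← hPuniv]; exact hPM)
    exact noncompact_univ ℂ this
  -- f '' P is open
  have hopen : IsOpen (S.f '' P) := by
    have han : AnalyticOnNhd ℂ S.f P :=
      (S.hf_holo.analyticOnNhd S.hU_open).mono hPU
    rcases han.is_constant_or_isOpen hPconn.isPreconnected with h | h
    · exact absurd h hnotconst
    · exact h P subset_rfl hPopen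
  -- f '' P is closed in C
  have hclosed : C ∩ closure (S.f '' P) ⊆ S.f '' P := by
    intro y hy
    obtain ⟨hyC, hycl⟩ := hy
    have hyV : y ∈ S.V := hAV (hCA hyC)
    obtain ⟨r, hr0, hrV⟩ : ∃ r > 0, Metric.closedBall y r ⊆ S.V := by
      obtain ⟨r, hr0, h⟩ := Metric.isOpen_iff.mp S.hV_open y hyV
      exact ⟨r/2, by positivity,
        (Metric.closedBall_subset_ball (by linarith)).trans h⟩
    have hM : IsCompact (S.U ∩ S.f ⁻¹' Metric.closedBall y r) :=
      S.hf_proper _ hrV (isCompact_closedBall _ _)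
    set T := closure P ∩ (S.U ∩ S.f ⁻¹' Metric.closedBall y r) with hTdef
    have hT : IsCompact T := hM.inter_left isClosed_closure
    have hTU : T ⊆ S.U := fun z hz => hz.2.1
    have hfT : IsCompact (S.f '' T) := hT.image_of_continuousOn (S.f_contOn.mono hTU)
    have hyT : y ∈ closure (S.f '' T) := by
      rw [mem_closure_iff]
      intro o ho hyo
      obtain ⟨w, ⟨hwo, hwb⟩, z, hzP, rfl⟩ :=
        mem_closure_iff.mp hycl (o ∩ Metric.ball y r) (ho.inter Metric.isOpen_ball)
          ⟨hyo, Metric.mem_ball_self hr0⟩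
      exact ⟨S.f z, hwo,
        ⟨z, ⟨subset_closure hzP, hPU hzP, Metric.ball_subset_closedBall hwb⟩, rfl⟩⟩
    have hyT' : y ∈ S.f '' T := by
      rwa [hfT.isClosed.closure_eq] at hyT
    obtain ⟨p, hpT, rfl⟩ := hyT'
    have hpB : p ∈ B := ⟨hpT.2.1, by
      simp only [mem_preimage]; exact hCA hyC⟩
    have hcomp : connectedComponentIn B p = P := by
      obtain ⟨q, hq1, hq2⟩ : (connectedComponentIn B p ∩ P).Nonempty :=
        mem_closure_iff.mp hpT.1 _ hBopen.connectedComponentIn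
          (mem_connectedComponentIn hpB)
      rw [connectedComponentIn_eq hq1, hPdef, connectedComponentIn_eq (show q ∈ connectedComponentIn B x from hq2)]
    exact ⟨p, hcomp ▸ mem_connectedComponentIn hpB, rfl⟩
  -- conclude
  refine Subset.antisymm hfPC ?_
  have hcover : C ⊆ S.f '' P ∪ (C ∩ (closure (S.f '' P))ᶜ) := by
    intro c hc
    by_cases h : c ∈ closure (S.f '' P)
    · exact Or.inl (hclosed ⟨hc, h⟩)
    · exact Or.inr ⟨hc, h⟩
  refine isPreconnected_connectedComponentIn.subset_left_of_subset_union hopen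
    (hCopen.inter isClosed_closure.isOpen_compl) ?_ hcover
    ⟨S.f x, mem_connectedComponentIn hx.2, ⟨x, hxP, rfl⟩⟩
  exact Set.disjoint_left.mpr fun z hz hz' => hz'.2 (subset_closure hz)

lemma image_piece_succ (k : ℕ) {x : ℂ} (hx : x ∈ S.preV (k+1)) :
    S.f '' S.piece (k+1) x = S.piece k (S.f x) :=
  S.image_component (S.preV_open k) ((S.preV_mono (Nat.zero_le k)).trans subset_rfl) hx

lemma image_piece : ∀ (n : ℕ) {d : ℕ} {x : ℂ}, x ∈ S.preV (n + d) →
    S.f^[n] '' S.piece (n + d) x = S.piece d (S.f^[n] x) := by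
  intro n
  induction n with
  | zero => intro d x _; simp [Nat.zero_add]
  | succ n ih =>
    intro d x hx
    rw [show n + 1 + d = (n + d) + 1 by omega] at hx ⊢
    have h1 : S.f '' S.piece ((n + d) + 1) x = S.piece (n + d) (S.f x) :=
      S.image_piece_succ _ hx
    calc S.f^[n+1] '' S.piece ((n + d) + 1) x
        = S.f^[n] '' (S.f '' S.piece ((n + d) + 1) x) := by
          rw [Function.iterate_succ, Set.image_comp]
      _ = S.f^[n] '' S.piece (n + d) (S.f x) := by rw [h1]
      _ = S.piece d (S.f^[n] (S.f x)) := ih hx.2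
      _ = S.piece d (S.f^[n+1] x) := by rw [Function.iterate_succ_apply]


lemma comp_eq_of_absorbing {F : Set (Set ℂ)} (hop : ∀ Q ∈ F, IsOpen Q) {R : Set ℂ}
    (hR : R ∈ F) (hRc : IsPreconnected R)
    (habs : ∀ Q ∈ F, (Q ∩ R).Nonempty → Q ⊆ R) {x : ℂ} (hx : x ∈ R) :
    connectedComponentIn (⋃₀ F) x = R := by
  have hxU : x ∈ ⋃₀ F := ⟨R, hR, hx⟩
  apply Subset.antisymm
  · have hv : IsOpen (⋃₀ {Q | Q ∈ F ∧ Q ∩ R = ∅}) :=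
      isOpen_sUnion fun Q hQ => hop Q hQ.1
    refine isPreconnected_connectedComponentIn.subset_left_of_subset_union
      (hop R hR) hv ?_ ?_ ⟨x, mem_connectedComponentIn hxU, hx⟩
    · rw [Set.disjoint_left]
      rintro z hzR ⟨Q, ⟨hQF, hQR⟩, hzQ⟩
      have : z ∈ Q ∩ R := ⟨hzQ, hzR⟩
      rw [hQR] at this
      exact this
    · intro z hz
      obtain ⟨Q, hQF, hzQ⟩ := connectedComponentIn_subset _ _ hz
      by_cases hQR : (Q ∩ R).Nonempty
      · exact Or.inl (habs Q hQF hQR hzQ)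
      · exact Or.inr ⟨Q, ⟨hQF, not_nonempty_iff_eq_empty.mp hQR⟩, hzQ⟩
  · exact hRc.subset_connectedComponentIn hx (subset_sUnion_of_mem hR)

lemma exists_max_piece {F : Set (Set ℂ)} (hfin : F.Finite)
    (hnest : ∀ P ∈ F, ∀ Q ∈ F, (P ∩ Q).Nonempty → P ⊆ Q ∨ Q ⊆ P)
    {x : ℂ} (hx : x ∈ ⋃₀ F) :
    ∃ R ∈ F, x ∈ R ∧ ∀ Q ∈ F, (Q ∩ R).Nonempty → Q ⊆ R := by
  classical
  have hFxfin : {Q | Q ∈ F ∧ x ∈ Q}.Finite := hfin.subset (fun Q hQ => hQ.1)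
  have hFxne : {Q | Q ∈ F ∧ x ∈ Q}.Nonempty := by
    obtain ⟨R, hR, hxR⟩ := hx; exact ⟨R, hR, hxR⟩
  obtain ⟨R, hRmem, hmax⟩ := hFxfin.toFinset.exists_maximal
    (by rwa [Set.Finite.toFinset_nonempty])
  rw [Set.Finite.mem_toFinset] at hRmem
  refine ⟨R, hRmem.1, hRmem.2, ?_⟩
  rintro Q hQ ⟨z, hzQ, hzR⟩
  rcases hnest Q hQ R hRmem.1 ⟨z, hzQ, hzR⟩ with h | h
  · exact h
  · have hQx : Q ∈ hFxfin.toFinset := by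
      rw [Set.Finite.mem_toFinset]; exact ⟨hQ, h hRmem.2⟩
    have hns := hmax hQx h
    by_contra hQR
    exact hQR hns

end Setup

/-- If `[c1] ≠ [c2]`, `W_i` is a nice set consisting of finitely
many puzzle pieces each containing a point of `[c_i]`, `[c2]` does not
accumulate to `[c1]`, and the minimal depth of the pieces of `W_2` is at least
the maximal depth of the pieces of `W_1`, then `W_1 ∪ W_2` is nice. -/
theorem stmt_11 (S : Setup) (h1 : S.OneCritPerComp) (h2 : S.StarStar)
    (c1 c2 : ℂ) (hc1 : c1 ∈ S.Crit) (hc2 : c2 ∈ S.Crit)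
    (hne : S.cls c1 ≠ S.cls c2)
    (W1 W2 : Set ℂ) (P1 P2 : Set (Set ℂ))
    (hP1fin : P1.Finite) (hP1p : ∀ P ∈ P1, S.IsPiece P)
    (hP1c : ∀ P ∈ P1, ∃ c ∈ S.cls c1, c ∈ P)
    (hW1 : W1 = ⋃₀ P1) (hW1n : S.Nice W1)
    (hP2fin : P2.Finite) (hP2p : ∀ P ∈ P2, S.IsPiece P)
    (hP2c : ∀ P ∈ P2, ∃ c ∈ S.cls c2, c ∈ P)
    (hW2 : W2 = ⋃₀ P2) (hW2n : S.Nice W2)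
    (hacc2 : ¬ S.ClassAcc (S.cls c2) (S.cls c1))
    (hdepth : ∀ P ∈ P1, ∀ Q ∈ P2, ∀ m n : ℕ,
      S.IsPieceOfDepth m P → S.IsPieceOfDepth n Q → m ≤ n) :
    S.Nice (W1 ∪ W2) := by
  intro x hx n hn hstrict
  obtain ⟨y, hy, hsub⟩ := hstrict
  have hWeq : W1 ∪ W2 = ⋃₀ (P1 ∪ P2) := by rw [hW1, hW2, Set.sUnion_union]
  have hFfin : (P1 ∪ P2).Finite := hP1fin.union hP2fin
  have hFp : ∀ Q ∈ P1 ∪ P2, S.IsPiece Q := fun Q hQ => hQ.elim (hP1p Q) (hP2p Q)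
  have hop : ∀ Q ∈ P1 ∪ P2, IsOpen Q := fun Q hQ => by
    obtain ⟨m, hm⟩ := hFp Q hQ; exact S.pieceOfDepth_open hm
  have hnest : ∀ P ∈ P1 ∪ P2, ∀ Q ∈ P1 ∪ P2, (P ∩ Q).Nonempty → P ⊆ Q ∨ Q ⊆ P := by
    intro P hP Q hQ hPQ
    obtain ⟨m, hm⟩ := hFp P hP
    obtain ⟨m', hm'⟩ := hFp Q hQ
    rcases le_total m' m with h | h
    · exact Or.inl (S.nested h hm hm' hPQ)
    · exact Or.inr (S.nested h hm' hm
        ⟨hPQ.choose, hPQ.choose_spec.2, hPQ.choose_spec.1⟩)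
  obtain ⟨R, hRF, hxR, hRabs⟩ := Setup.exists_max_piece hFfin hnest (hWeq ▸ hx)
  obtain ⟨Rq, hRqF, hyRq, hRqabs⟩ := Setup.exists_max_piece hFfin hnest (hWeq ▸ hy)
  have hRpc : IsPreconnected R := by
    obtain ⟨m, hm⟩ := hFp R hRF; exact S.pieceOfDepth_preconn hm
  have hRqpc : IsPreconnected Rq := by
    obtain ⟨m, hm⟩ := hFp Rq hRqF; exact S.pieceOfDepth_preconn hm
  have hCx : connectedComponentIn (W1 ∪ W2) x = R := by
    rw [hWeq]; exact Setup.comp_eq_of_absorbing hop hRF hRpc hRabs hxR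
  have hCy : connectedComponentIn (W1 ∪ W2) y = Rq := by
    rw [hWeq]; exact Setup.comp_eq_of_absorbing hop hRqF hRqpc hRqabs hyRq
  rw [hCx, hCy] at hsub
  have classify : ∀ T ∈ P1 ∪ P2, (∀ Q ∈ P1 ∪ P2, (Q ∩ T).Nonempty → Q ⊆ T) →
      T ∈ P1 ∨ (¬ (T ∩ W1).Nonempty ∧ T ∈ P2) := by
    intro T hTF habs
    by_cases hTW1 : (T ∩ W1).Nonempty
    · left
      obtain ⟨z, hzT, hzW1⟩ := hTW1
      rw [hW1] at hzW1
      obtain ⟨Q1, hQ1, hzQ1⟩ := hzW1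
      have hQ1T : Q1 ⊆ T := habs Q1 (Or.inl hQ1) ⟨z, hzQ1, hzT⟩
      rcases hTF with h | h
      · exact h
      · obtain ⟨mT, hmT⟩ := hP2p T h
        obtain ⟨m1, hm1⟩ := hP1p Q1 hQ1
        have hle : m1 ≤ mT := hdepth Q1 hQ1 T h m1 mT hm1 hmT
        have hTQ1 : T ⊆ Q1 := S.nested hle hmT hm1 ⟨z, hzT, hzQ1⟩
        have hTeq : T = Q1 := Subset.antisymm hTQ1 hQ1T
        rw [hTeq]; exact hQ1
    · right
      refine ⟨hTW1, ?_⟩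
      rcases hTF with h | h
      · exfalso
        obtain ⟨c, _, hcT⟩ := hP1c T h
        exact hTW1 ⟨c, hcT, by rw [hW1]; exact ⟨T, h, hcT⟩⟩
      · exact h
  rcases classify Rq hRqF hRqabs with hQ1case | hQ2case
  · -- Rq comes from P1
    obtain ⟨c'', hc'', hc''Rq⟩ := hP1c Rq hQ1case
    rcases classify R hRF hRabs with hR1 | hR2
    · -- both from P1: contradict niceness of W1
      obtain ⟨c₀, _, hc₀R⟩ := hP1c R hR1
      have hc₀W1 : c₀ ∈ W1 := by rw [hW1]; exact ⟨R, hR1, hc₀R⟩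
      have hc''W1 : c'' ∈ W1 := by rw [hW1]; exact ⟨Rq, hQ1case, hc''Rq⟩
      have hop1 : ∀ Q ∈ P1, IsOpen Q := fun Q hQ => hop Q (Or.inl hQ)
      have e1 : connectedComponentIn W1 c₀ = R := by
        rw [hW1]
        exact Setup.comp_eq_of_absorbing hop1 hR1 hRpc
          (fun Q hQ => hRabs Q (Or.inl hQ)) hc₀R
      have e2 : connectedComponentIn W1 c'' = Rq := by
        rw [hW1]
        exact Setup.comp_eq_of_absorbing hop1 hQ1case hRqpc
          (fun Q hQ => hRqabs Q (Or.inl hQ)) hc''Rq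
      exact hW1n c₀ hc₀W1 n hn ⟨c'', hc''W1, by rw [e1, e2]; exact hsub⟩
    · -- R from P2, Rq from P1: contradict (∗∗)
      obtain ⟨c', hc', hc'R⟩ := hP2c R hR2.2
      have hnacc : ¬ S.Acc c' c'' := fun hA => hacc2 ⟨c', hc', c'', hc'', hA⟩
      obtain ⟨m1, hm1⟩ := hP1p Rq hQ1case
      have hRq0 : Rq ⊆ S.piece 0 c'' := by
        have hsubV : Rq ⊆ S.preV 0 :=
          (S.pieceOfDepth_sub hm1).trans (S.preV_mono (Nat.zero_le m1))
        exact (S.pieceOfDepth_preconn hm1).subset_connectedComponentIn hc''Rq hsubV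
      have hmem : S.f^[n] c' ∈ S.piece 0 c'' := hRq0 (hsub.subset ⟨c', hc'R, rfl⟩)
      exact h2 c' hc'.1 c'' hc''.1 hnacc n hn hmem
  · -- Rq comes from P2, disjoint from W1
    obtain ⟨d, hd⟩ := hP2p Rq hQ2case.2
    rcases classify R hRF hRabs with hR1 | hR2
    · -- R from P1: pull-back argument using the critical orbit
      obtain ⟨c, hc, hcR⟩ := hP1c R hR1
      obtain ⟨m, hm⟩ := hP1p R hR1
      have hmd : m ≤ d := hdepth R hR1 Rq hQ2case.2 m d hm hd
      have horb : ∀ j, S.f^[j] c ∈ S.U := S.hf_crit c hc.1.1 hc.1.2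
      have hfnc : S.f^[n] c ∈ Rq := hsub.subset ⟨c, hcR, rfl⟩
      have hfnc' : S.f^[n] c ∈ S.preV d := S.pieceOfDepth_sub hd hfnc
      have hcpre : c ∈ S.preV (n + d) := S.orbit_mem_preV n horb hfnc'
      have hP'R : S.piece (n + d) c ⊆ R := by
        have h1 : S.piece (n + d) c ⊆ S.preV m :=
          (connectedComponentIn_subset _ _).trans (S.preV_mono (by omega))
        have h2' : S.piece (n + d) c ⊆ connectedComponentIn (S.preV m) c :=
          isPreconnected_connectedComponentIn.subset_connectedComponentIn
            (mem_connectedComponentIn hcpre) h1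
        rwa [← S.pieceOfDepth_eq hm hcR] at h2'
      have himg : S.f^[n] '' S.piece (n + d) c = S.piece d (S.f^[n] c) :=
        S.image_piece n hcpre
      have hRqeq : Rq = S.piece d (S.f^[n] c) := S.pieceOfDepth_eq hd hfnc
      have hge : Rq ⊆ S.f^[n] '' R := by
        rw [hRqeq, ← himg]; exact Set.image_mono hP'R
      exact hsub.not_subset hge
    · -- both from P2: contradict niceness of W2
      obtain ⟨c₀, _, hc₀R⟩ := hP2c R hR2.2
      obtain ⟨c'', _, hc''Rq⟩ := hP2c Rq hQ2case.2
      have hc₀W2 : c₀ ∈ W2 := by rw [hW2]; exact ⟨R, hR2.2, hc₀R⟩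
      have hc''W2 : c'' ∈ W2 := by rw [hW2]; exact ⟨Rq, hQ2case.2, hc''Rq⟩
      have hop2 : ∀ Q ∈ P2, IsOpen Q := fun Q hQ => hop Q (Or.inr hQ)
      have e1 : connectedComponentIn W2 c₀ = R := by
        rw [hW2]
        exact Setup.comp_eq_of_absorbing hop2 hR2.2 hRpc
          (fun Q hQ => hRabs Q (Or.inr hQ)) hc₀R
      have e2 : connectedComponentIn W2 c'' = Rq := by
        rw [hW2]
        exact Setup.comp_eq_of_absorbing hop2 hQ2case.2 hRqpc
          (fun Q hQ => hRqabs Q (Or.inr hQ)) hc''Rq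
      exact hW2n c₀ hc₀W2 n hn ⟨c'', hc''W2, by rw [e1, e2]; exact hsub⟩
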